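/- arXiv:2601.22287 — 5 statements merged into one kernel-verified Lean document; each statement's English description precedes it below -/
import Mathlib

section
/- Let (A, B, i) on spaces (D_v) and (A', B', i') on spaces (D'_v) be framed representation data with the same framing spaces (F_v), and assume (A, B, i) is stable. Suppose two families of linear maps π_v, π̃_v : D_v → D'_v both intertwine the data, i.e. π_{t(e)}∘A_e = A'_e∘π_{s(e)}, π_{s(e)}∘B_e = B'_e∘π_{t(e)} for all arrows e and π_v∘i_v = i'_v for all vertices v, and the same identities hold with π replaced by π̃. Then π_v = π̃_v for every vertex v. (This is the key step in the proof that the split parabolic quiver variety embeds into the product of the corresponding Nakajima quiver varieties.) -/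
open Module LinearMap

/-- Transport along an equality of vertices. -/
def dcast {V : Type*} (D : V → Type*) [∀ v, AddCommGroup (D v)] [∀ v, Module ℂ (D v)]
    {v w : V} (h : v = w) : D v →ₗ[ℂ] D w := by subst h; exact LinearMap.id

/-- Stability of framed representation data `(A, B, i)` of a quiver with source/target
maps `s t : E → V`, on spaces `D` with framing spaces `F`: the only subrepresentation
containing the image of the framing maps is everything. -/
def Stable {V E : Type*} (s t : E → V)
    (D : V → Type*) [∀ v, AddCommGroup (D v)] [∀ v, Module ℂ (D v)]
    (F : V → Type*) [∀ v, AddCommGroup (F v)] [∀ v, Module ℂ (F v)]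
    (A : ∀ e, D (s e) →ₗ[ℂ] D (t e))
    (B : ∀ e, D (t e) →ₗ[ℂ] D (s e))
    (i : ∀ v, F v →ₗ[ℂ] D v) : Prop :=
  ∀ S : ∀ v, Submodule ℂ (D v),
    (∀ e, ∀ x ∈ S (s e), A e x ∈ S (t e)) →
    (∀ e, ∀ x ∈ S (t e), B e x ∈ S (s e)) →
    (∀ v, ∀ f, i v f ∈ S v) →
    ∀ v, S v = ⊤

/-- Two families of intertwiners out of a stable framed representation coincide. -/
theorem intertwiner_unique
    {V E : Type*} [Fintype V] [Fintype E] (s t : E → V)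
    (D D' F : V → Type*)
    [∀ v, AddCommGroup (D v)] [∀ v, Module ℂ (D v)] [∀ v, FiniteDimensional ℂ (D v)]
    [∀ v, AddCommGroup (D' v)] [∀ v, Module ℂ (D' v)] [∀ v, FiniteDimensional ℂ (D' v)]
    [∀ v, AddCommGroup (F v)] [∀ v, Module ℂ (F v)] [∀ v, FiniteDimensional ℂ (F v)]
    (A : ∀ e, D (s e) →ₗ[ℂ] D (t e)) (B : ∀ e, D (t e) →ₗ[ℂ] D (s e))
    (i : ∀ v, F v →ₗ[ℂ] D v)
    (A' : ∀ e, D' (s e) →ₗ[ℂ] D' (t e)) (B' : ∀ e, D' (t e) →ₗ[ℂ] D' (s e))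
    (i' : ∀ v, F v →ₗ[ℂ] D' v)
    (hstable : Stable s t D F A B i)
    (π π' : ∀ v, D v →ₗ[ℂ] D' v)
    (hA : ∀ e, π (t e) ∘ₗ A e = A' e ∘ₗ π (s e))
    (hB : ∀ e, π (s e) ∘ₗ B e = B' e ∘ₗ π (t e))
    (hi : ∀ v, π v ∘ₗ i v = i' v)
    (hA' : ∀ e, π' (t e) ∘ₗ A e = A' e ∘ₗ π' (s e))
    (hB' : ∀ e, π' (s e) ∘ₗ B e = B' e ∘ₗ π' (t e))
    (hi' : ∀ v, π' v ∘ₗ i v = i' v) :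
    ∀ v, π v = π' v := by
  have h := hstable (fun v => LinearMap.ker (π v - π' v))
    (fun e x hx => by
      simp only [LinearMap.mem_ker, LinearMap.sub_apply] at *
      have h1 := congrFun (congrArg DFunLike.coe (hA e)) x
      have h2 := congrFun (congrArg DFunLike.coe (hA' e)) x
      simp only [LinearMap.comp_apply] at h1 h2
      rw [h1, h2, ← map_sub, sub_eq_zero.mpr (sub_eq_zero.mp hx)]
      simp)
    (fun e x hx => by
      simp only [LinearMap.mem_ker, LinearMap.sub_apply] at *
      have h1 := congrFun (congrArg DFunLike.coe (hB e)) x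
      have h2 := congrFun (congrArg DFunLike.coe (hB' e)) x
      simp only [LinearMap.comp_apply] at h1 h2
      rw [h1, h2, ← map_sub, sub_eq_zero.mpr (sub_eq_zero.mp hx)]
      simp)
    (fun v f => by
      simp only [LinearMap.mem_ker, LinearMap.sub_apply]
      have h1 := congrFun (congrArg DFunLike.coe (hi v)) f
      have h2 := congrFun (congrArg DFunLike.coe (hi' v)) f
      simp only [LinearMap.comp_apply] at h1 h2
      rw [h1, h2, sub_self])
  intro v
  have := h v
  ext x
  have hx : x ∈ LinearMap.ker (π v - π' v) := by rw [show LinearMap.ker (π v - π' v) = ⊤ from this]; trivial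
  simpa [sub_eq_zero] using hx
end

section
/- Fix, for each vertex v, a surjective linear map π_v : D_v → D̂_v between finite-dimensional ℂ-vector spaces with kernel K_v, and fix linear maps X̂_e : D̂_{s(e)} → D_{t(e)}, Ŷ_e : D̂_{t(e)} → D_{s(e)} for each arrow e, and a_v : F_v → D_v for each vertex v, such that the data (X̂_e∘π_{s(e)}, Ŷ_e∘π_{t(e)}, a_v) is stable. Let ξ_v : D_v → D_v be linear maps with ξ_v(K_v) ⊆ K_v for every v, and let ξ̂_v : D̂_v → D̂_v denote the induced maps (so π_v∘ξ_v = ξ̂_v∘π_v). If ξ_{t(e)}∘X̂_e = X̂_e∘ξ̂_{s(e)} and ξ_{s(e)}∘Ŷ_e = Ŷ_e∘ξ̂_{t(e)} for every arrow e, and ξ_v∘a_v = 0 for every vertex v, then ξ_v = 0 for every vertex v. (This is the injectivity of the map ȷ in the statement that the split parabolic quiver variety is smooth.) -/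
open Module LinearMap

/-- Injectivity of the map `ȷ`: an infinitesimal parabolic symmetry `ξ` preserving
the kernels of `π`, intertwining the data and killing the framing maps, vanishes. -/
theorem xi_eq_zero
    {V E : Type*} [Fintype V] [Fintype E] (s t : E → V)
    (D Dh F : V → Type*)
    [∀ v, AddCommGroup (D v)] [∀ v, Module ℂ (D v)] [∀ v, FiniteDimensional ℂ (D v)]
    [∀ v, AddCommGroup (Dh v)] [∀ v, Module ℂ (Dh v)] [∀ v, FiniteDimensional ℂ (Dh v)]
    [∀ v, AddCommGroup (F v)] [∀ v, Module ℂ (F v)] [∀ v, FiniteDimensional ℂ (F v)]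
    (π : ∀ v, D v →ₗ[ℂ] Dh v) (hπ : ∀ v, Function.Surjective (π v))
    (Xh : ∀ e, Dh (s e) →ₗ[ℂ] D (t e)) (Yh : ∀ e, Dh (t e) →ₗ[ℂ] D (s e))
    (a : ∀ v, F v →ₗ[ℂ] D v)
    (hstable : Stable s t D F (fun e => Xh e ∘ₗ π (s e)) (fun e => Yh e ∘ₗ π (t e)) a)
    (ξ : ∀ v, D v →ₗ[ℂ] D v) (ξh : ∀ v, Dh v →ₗ[ℂ] Dh v)
    (hcomm : ∀ v, π v ∘ₗ ξ v = ξh v ∘ₗ π v)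
    (hX : ∀ e, ξ (t e) ∘ₗ Xh e = Xh e ∘ₗ ξh (s e))
    (hY : ∀ e, ξ (s e) ∘ₗ Yh e = Yh e ∘ₗ ξh (t e))
    (ha : ∀ v, ξ v ∘ₗ a v = 0) :
    ∀ v, ξ v = 0 := by
  have key : ∀ v, LinearMap.ker (ξ v) = ⊤ := by
    apply hstable
    · intro e x hx
      simp only [LinearMap.mem_ker] at hx ⊢
      have h1 : ξh (s e) (π (s e) x) = 0 := by
        have := congrArg (fun f => f x) (hcomm (s e))
        simp only [LinearMap.comp_apply] at this
        rw [← this, hx, map_zero]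
      have := congrArg (fun f => f (π (s e) x)) (hX e)
      simp only [LinearMap.comp_apply] at this ⊢
      rw [this, h1, map_zero]
    · intro e x hx
      simp only [LinearMap.mem_ker] at hx ⊢
      have h1 : ξh (t e) (π (t e) x) = 0 := by
        have := congrArg (fun f => f x) (hcomm (t e))
        simp only [LinearMap.comp_apply] at this
        rw [← this, hx, map_zero]
      have := congrArg (fun f => f (π (t e) x)) (hY e)
      simp only [LinearMap.comp_apply] at this ⊢
      rw [this, h1, map_zero]
    · intro v f
      have := congrArg (fun g => g f) (ha v)
      simpa using this
  intro v
  ext x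
  have : x ∈ LinearMap.ker (ξ v) := by rw [key v]; trivial
  simpa using this
end

section
/- Fix, for each vertex v, a surjective linear map π_v : D_v → D̂_v between finite-dimensional ℂ-vector spaces, and fix linear maps X̂_e : D̂_{s(e)} → D_{t(e)}, Ŷ_e : D̂_{t(e)} → D_{s(e)} for each arrow e, and a_v : F_v → D_v, b̂_v : D̂_v → F_v for each vertex v, such that the data (X̂_e∘π_{s(e)}, Ŷ_e∘π_{t(e)}, a_v) is stable. Suppose linear maps C_v : D_v → D̂_v satisfy: π_{s(e)}∘Ŷ_e∘C_{t(e)} = C_{s(e)}∘Ŷ_e∘π_{t(e)} and C_{t(e)}∘X̂_e∘π_{s(e)} = π_{t(e)}∘X̂_e∘C_{s(e)} for every arrow e, and b̂_v∘C_v = 0 and C_v∘a_v = 0 for every vertex v. Then C_v = 0 for every vertex v. (This is the vanishing of the orthogonal complement of the image of the differential of the moment map, the key step in the proof that the split parabolic quiver variety is smooth.) -/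
open Module LinearMap

/-- Vanishing of the orthogonal complement of the image of `dμ`. -/
theorem C_eq_zero
    {V E : Type*} [Fintype V] [Fintype E] (s t : E → V)
    (D Dh F : V → Type*)
    [∀ v, AddCommGroup (D v)] [∀ v, Module ℂ (D v)] [∀ v, FiniteDimensional ℂ (D v)]
    [∀ v, AddCommGroup (Dh v)] [∀ v, Module ℂ (Dh v)] [∀ v, FiniteDimensional ℂ (Dh v)]
    [∀ v, AddCommGroup (F v)] [∀ v, Module ℂ (F v)] [∀ v, FiniteDimensional ℂ (F v)]
    (π : ∀ v, D v →ₗ[ℂ] Dh v) (hπ : ∀ v, Function.Surjective (π v))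
    (Xh : ∀ e, Dh (s e) →ₗ[ℂ] D (t e)) (Yh : ∀ e, Dh (t e) →ₗ[ℂ] D (s e))
    (a : ∀ v, F v →ₗ[ℂ] D v) (bh : ∀ v, Dh v →ₗ[ℂ] F v)
    (hstable : Stable s t D F (fun e => Xh e ∘ₗ π (s e)) (fun e => Yh e ∘ₗ π (t e)) a)
    (C : ∀ v, D v →ₗ[ℂ] Dh v)
    (hY : ∀ e, π (s e) ∘ₗ Yh e ∘ₗ C (t e) = C (s e) ∘ₗ Yh e ∘ₗ π (t e))
    (hX : ∀ e, C (t e) ∘ₗ Xh e ∘ₗ π (s e) = π (t e) ∘ₗ Xh e ∘ₗ C (s e))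
    (hb : ∀ v, bh v ∘ₗ C v = 0)
    (ha : ∀ v, C v ∘ₗ a v = 0) :
    ∀ v, C v = 0 := by
  intro v
  have h := hstable (fun v => LinearMap.ker (C v))
    (fun e x hx => by
      have := congrFun (congrArg DFunLike.coe (hX e)) x
      simp only [LinearMap.comp_apply] at this ⊢
      simp only [LinearMap.mem_ker] at hx ⊢
      rw [this, hx, map_zero, map_zero])
    (fun e x hx => by
      have := congrFun (congrArg DFunLike.coe (hY e)) x
      simp only [LinearMap.comp_apply] at this ⊢
      simp only [LinearMap.mem_ker] at hx ⊢
      rw [← this, hx, map_zero, map_zero])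
    (fun v f => by
      have := congrFun (congrArg DFunLike.coe (ha v)) f
      simpa using this)
  exact LinearMap.ker_eq_top.mp (h v)
end

section
/- Fix, for each vertex v, a surjective linear map π_v : D_v → D̂_v between finite-dimensional ℂ-vector spaces, and fix linear maps X̂_e : D̂_{s(e)} → D_{t(e)}, Ŷ_e : D̂_{t(e)} → D_{s(e)} for each arrow e, and a_v : F_v → D_v, b̂_v : D̂_v → F_v for each vertex v, such that the data (X̂_e∘π_{s(e)}, Ŷ_e∘π_{t(e)}, a_v) is stable. Then the linear map dμ from the direct sum ⊕_{e∈E}(Hom(D̂_{s(e)}, D_{t(e)}) ⊕ Hom(D̂_{t(e)}, D_{s(e)})) ⊕ ⊕_{v∈V}(Hom(F_v, D_v) ⊕ Hom(D̂_v, F_v)) to ⊕_{v∈V} Hom(D̂_v, D_v), whose component at a vertex v applied to a tuple (Â, B̂, i, ĵ) equals ∑_{e : t(e)=v}(Â_e∘π_{s(e)}∘Ŷ_e + X̂_e∘π_{s(e)}∘B̂_e) − ∑_{e : s(e)=v}(Ŷ_e∘π_{t(e)}∘Â_e + B̂_e∘π_{t(e)}∘X̂_e) + i_v∘b̂_v +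 a_v∘ĵ_v, is surjective. (This is the surjectivity of dμ in the statement that the split parabolic quiver variety is smooth.) -/
open Module LinearMap

@[simp] lemma dcast_rfl {V : Type*} (D : V → Type*) [∀ v, AddCommGroup (D v)]
    [∀ v, Module ℂ (D v)] (v : V) : dcast D (rfl : v = v) = LinearMap.id := rfl

/-- Nondegeneracy of the trace pairing. -/
lemma eq_of_trace_comp_eq {M N : Type*} [AddCommGroup M] [Module ℂ M] [FiniteDimensional ℂ M]
    [AddCommGroup N] [Module ℂ N] [FiniteDimensional ℂ N]
    (P Q : M →ₗ[ℂ] N)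
    (h : ∀ f : N →ₗ[ℂ] M, trace ℂ N (P ∘ₗ f) = trace ℂ N (Q ∘ₗ f)) : P = Q := by
  rw [← sub_eq_zero]
  set ζ := P - Q with hζ
  have h0 : ∀ f : N →ₗ[ℂ] M, trace ℂ N (ζ ∘ₗ f) = 0 := by
    intro f; simp [hζ, sub_comp, map_sub, h f]
  ext x
  simp only [LinearMap.zero_apply]
  rw [← (Module.forall_dual_apply_eq_zero_iff ℂ (ζ x))]
  intro φ
  have := h0 (dualTensorHom ℂ N M (φ ⊗ₜ x))
  have hcomp : ζ ∘ₗ dualTensorHom ℂ N M (φ ⊗ₜ x) = dualTensorHom ℂ N N (φ ⊗ₜ ζ x) := by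
    ext y; simp [dualTensorHom_apply]
  rw [hcomp, trace_eq_contract_apply, contractLeft_apply] at this
  simpa using this

section Aux

variable {V E : Type*} [Fintype V] [Fintype E] [DecidableEq V] (s t : E → V)
    (D Dh F : V → Type*)
    [∀ v, AddCommGroup (D v)] [∀ v, Module ℂ (D v)] [∀ v, FiniteDimensional ℂ (D v)]
    [∀ v, AddCommGroup (Dh v)] [∀ v, Module ℂ (Dh v)] [∀ v, FiniteDimensional ℂ (Dh v)]
    [∀ v, AddCommGroup (F v)] [∀ v, Module ℂ (F v)] [∀ v, FiniteDimensional ℂ (F v)]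
    (π : ∀ v, D v →ₗ[ℂ] Dh v)
    (Xh : ∀ e, Dh (s e) →ₗ[ℂ] D (t e)) (Yh : ∀ e, Dh (t e) →ₗ[ℂ] D (s e))
    (a : ∀ v, F v →ₗ[ℂ] D v) (bh : ∀ v, Dh v →ₗ[ℂ] F v)

/-- The parameter space of the differential. -/
abbrev ParamSpace :=
  (∀ e, Dh (s e) →ₗ[ℂ] D (t e)) × (∀ e, Dh (t e) →ₗ[ℂ] D (s e)) ×
    (∀ v, F v →ₗ[ℂ] D v) × (∀ v, Dh v →ₗ[ℂ] F v)

/-- The differential of the moment map, as a bundled linear map. -/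
def dmuMap : ParamSpace s t D Dh F →ₗ[ℂ] (∀ v, Dh v →ₗ[ℂ] D v) where
  toFun p := fun v =>
    (∑ e : E, if h : t e = v then
        dcast D h ∘ₗ (p.1 e ∘ₗ π (s e) ∘ₗ Yh e + Xh e ∘ₗ π (s e) ∘ₗ p.2.1 e)
          ∘ₗ dcast Dh h.symm else 0)
    - (∑ e : E, if h : s e = v then
        dcast D h ∘ₗ (Yh e ∘ₗ π (t e) ∘ₗ p.1 e + p.2.1 e ∘ₗ π (t e) ∘ₗ Xh e)
          ∘ₗ dcast Dh h.symm else 0)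
    + p.2.2.1 v ∘ₗ bh v + a v ∘ₗ p.2.2.2 v
  map_add' p q := by
    funext v
    have h1 : ∀ e : E, (if h : t e = v then
        dcast D h ∘ₗ ((p.1 e + q.1 e) ∘ₗ π (s e) ∘ₗ Yh e
          + Xh e ∘ₗ π (s e) ∘ₗ (p.2.1 e + q.2.1 e)) ∘ₗ dcast Dh h.symm else 0)
        = (if h : t e = v then
        dcast D h ∘ₗ (p.1 e ∘ₗ π (s e) ∘ₗ Yh e + Xh e ∘ₗ π (s e) ∘ₗ p.2.1 e)
          ∘ₗ dcast Dh h.symm else 0)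
        + (if h : t e = v then
        dcast D h ∘ₗ (q.1 e ∘ₗ π (s e) ∘ₗ Yh e + Xh e ∘ₗ π (s e) ∘ₗ q.2.1 e)
          ∘ₗ dcast Dh h.symm else 0) := by
      intro e
      split
      · simp only [add_comp, comp_add]; abel
      · simp
    have h2 : ∀ e : E, (if h : s e = v then
        dcast D h ∘ₗ (Yh e ∘ₗ π (t e) ∘ₗ (p.1 e + q.1 e)
          + (p.2.1 e + q.2.1 e) ∘ₗ π (t e) ∘ₗ Xh e) ∘ₗ dcast Dh h.symm else 0)
        = (if h : s e = v then
        dcast D h ∘ₗ (Yh e ∘ₗ π (t e) ∘ₗ p.1 e + p.2.1 e ∘ₗ π (t e) ∘ₗ Xh e)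
          ∘ₗ dcast Dh h.symm else 0)
        + (if h : s e = v then
        dcast D h ∘ₗ (Yh e ∘ₗ π (t e) ∘ₗ q.1 e + q.2.1 e ∘ₗ π (t e) ∘ₗ Xh e)
          ∘ₗ dcast Dh h.symm else 0) := by
      intro e
      split
      · simp only [add_comp, comp_add]; abel
      · simp
    simp only [Prod.fst_add, Prod.snd_add, Pi.add_apply]
    rw [Finset.sum_congr rfl (fun e _ => h1 e), Finset.sum_congr rfl (fun e _ => h2 e),
      Finset.sum_add_distrib, Finset.sum_add_distrib]
    simp only [add_comp, comp_add]
    abel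
  map_smul' c p := by
    funext v
    have h1 : ∀ e : E, (if h : t e = v then
        dcast D h ∘ₗ ((c • p.1 e) ∘ₗ π (s e) ∘ₗ Yh e
          + Xh e ∘ₗ π (s e) ∘ₗ (c • p.2.1 e)) ∘ₗ dcast Dh h.symm else 0)
        = c • (if h : t e = v then
        dcast D h ∘ₗ (p.1 e ∘ₗ π (s e) ∘ₗ Yh e + Xh e ∘ₗ π (s e) ∘ₗ p.2.1 e)
          ∘ₗ dcast Dh h.symm else 0) := by
      intro e
      split
      · simp only [smul_comp, comp_smul, ← smul_add]
      · simp
    have h2 : ∀ e : E, (if h : s e = v then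
        dcast D h ∘ₗ (Yh e ∘ₗ π (t e) ∘ₗ (c • p.1 e)
          + (c • p.2.1 e) ∘ₗ π (t e) ∘ₗ Xh e) ∘ₗ dcast Dh h.symm else 0)
        = c • (if h : s e = v then
        dcast D h ∘ₗ (Yh e ∘ₗ π (t e) ∘ₗ p.1 e + p.2.1 e ∘ₗ π (t e) ∘ₗ Xh e)
          ∘ₗ dcast Dh h.symm else 0) := by
      intro e
      split
      · simp only [smul_comp, comp_smul, ← smul_add]
      · simp
    simp only [Prod.smul_fst, Prod.smul_snd, Pi.smul_apply, RingHom.id_apply]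
    rw [Finset.sum_congr rfl (fun e _ => h1 e), Finset.sum_congr rfl (fun e _ => h2 e),
      ← Finset.smul_sum, ← Finset.smul_sum]
    simp only [smul_comp, comp_smul, smul_sub, smul_add]

/-- The trace pairing, as a map into the dual. -/
noncomputable def traceDual : (∀ v, D v →ₗ[ℂ] Dh v) →ₗ[ℂ] Module.Dual ℂ (∀ v, Dh v →ₗ[ℂ] D v) where
  toFun ξ := ∑ v : V, (trace ℂ (Dh v)) ∘ₗ (llcomp ℂ (Dh v) (D v) (Dh v) (ξ v))
    ∘ₗ (LinearMap.proj v)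
  map_add' ξ ζ := by
    rw [← Finset.sum_add_distrib]
    refine Finset.sum_congr rfl fun v _ => ?_
    ext g
    simp [llcomp_apply, add_comp]
  map_smul' c ξ := by
    rw [RingHom.id_apply, Finset.smul_sum]
    refine Finset.sum_congr rfl fun v _ => ?_
    ext g
    simp [llcomp_apply, smul_comp]

lemma traceDual_apply (ξ : ∀ v, D v →ₗ[ℂ] Dh v) (g : ∀ v, Dh v →ₗ[ℂ] D v) :
    traceDual D Dh ξ g = ∑ v : V, trace ℂ (Dh v) (ξ v ∘ₗ g v) := by
  simp only [traceDual, LinearMap.coe_mk, AddHom.coe_mk, LinearMap.sum_apply, comp_apply,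
    proj_apply]
  exact Finset.sum_congr rfl fun v _ => rfl

lemma traceDual_surjective : Function.Surjective (traceDual D Dh) := by
  have hinj : Function.Injective (traceDual D Dh) := by
    rw [injective_iff_map_eq_zero]
    intro ξ hξ
    funext v
    refine eq_of_trace_comp_eq (ξ v) 0 fun f => ?_
    have := congrFun (congrArg DFunLike.coe hξ) (Pi.single v f)
    simp only [traceDual_apply, LinearMap.zero_apply] at this
    rw [Finset.sum_eq_single v (fun w _ hw => by
      rw [Pi.single_eq_of_ne hw]; simp) (by simp)] at this
    rw [Pi.single_eq_same] at this
    simp [this]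
  have hrank : finrank ℂ (∀ v, D v →ₗ[ℂ] Dh v)
      = finrank ℂ (Module.Dual ℂ (∀ v, Dh v →ₗ[ℂ] D v)) := by
    rw [Subspace.dual_finrank_eq, Module.finrank_pi_fintype, Module.finrank_pi_fintype]
    exact Finset.sum_congr rfl fun v _ => by
      rw [Module.finrank_linearMap, Module.finrank_linearMap, mul_comm]
  exact (LinearMap.injective_iff_surjective_of_finrank_eq_finrank hrank).mp hinj

lemma sum_trace_dite (ξ : ∀ v, D v →ₗ[ℂ] Dh v) (w : V) (f : Dh w →ₗ[ℂ] D w) :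
    ∑ v : V, trace ℂ (Dh v) (ξ v ∘ₗ (if h : w = v then
        dcast D h ∘ₗ f ∘ₗ dcast Dh h.symm else 0))
      = trace ℂ (Dh w) (ξ w ∘ₗ f) := by
  rw [Finset.sum_eq_single w (fun v _ hv => by rw [dif_neg (fun h => hv h.symm)]; simp)
    (by simp)]
  · rw [dif_pos rfl]
    simp

end Aux

set_option maxHeartbeats 2000000 in
/-- Surjectivity of the differential of the moment map on the split parabolic
representation space. -/
theorem dmu_surjective
    {V E : Type*} [Fintype V] [Fintype E] [DecidableEq V] (s t : E → V)
    (D Dh F : V → Type*)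
    [∀ v, AddCommGroup (D v)] [∀ v, Module ℂ (D v)] [∀ v, FiniteDimensional ℂ (D v)]
    [∀ v, AddCommGroup (Dh v)] [∀ v, Module ℂ (Dh v)] [∀ v, FiniteDimensional ℂ (Dh v)]
    [∀ v, AddCommGroup (F v)] [∀ v, Module ℂ (F v)] [∀ v, FiniteDimensional ℂ (F v)]
    (π : ∀ v, D v →ₗ[ℂ] Dh v) (hπ : ∀ v, Function.Surjective (π v))
    (Xh : ∀ e, Dh (s e) →ₗ[ℂ] D (t e)) (Yh : ∀ e, Dh (t e) →ₗ[ℂ] D (s e))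
    (a : ∀ v, F v →ₗ[ℂ] D v) (bh : ∀ v, Dh v →ₗ[ℂ] F v)
    (hstable : Stable s t D F (fun e => Xh e ∘ₗ π (s e)) (fun e => Yh e ∘ₗ π (t e)) a) :
    ∀ C : ∀ v, Dh v →ₗ[ℂ] D v,
      ∃ (Ah : ∀ e, Dh (s e) →ₗ[ℂ] D (t e)) (Bh : ∀ e, Dh (t e) →ₗ[ℂ] D (s e))
        (i : ∀ v, F v →ₗ[ℂ] D v) (jh : ∀ v, Dh v →ₗ[ℂ] F v),
        ∀ v,
          (∑ e : E, if h : t e = v then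
              dcast D h ∘ₗ (Ah e ∘ₗ π (s e) ∘ₗ Yh e + Xh e ∘ₗ π (s e) ∘ₗ Bh e)
                ∘ₗ dcast Dh h.symm else 0)
          - (∑ e : E, if h : s e = v then
              dcast D h ∘ₗ (Yh e ∘ₗ π (t e) ∘ₗ Ah e + Bh e ∘ₗ π (t e) ∘ₗ Xh e)
                ∘ₗ dcast Dh h.symm else 0)
          + i v ∘ₗ bh v + a v ∘ₗ jh v = C v := by
  classical
  have hrange : LinearMap.range (dmuMap s t D Dh F π Xh Yh a bh) = ⊤ := by
    by_contra hR
    -- find a nonzero functional vanishing on the range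
    obtain ⟨C₀, hC₀⟩ : ∃ C₀, C₀ ∉ LinearMap.range (dmuMap s t D Dh F π Xh Yh a bh) := by
      by_contra h; push_neg at h
      exact hR (Submodule.eq_top_iff'.mpr h)
    set R := LinearMap.range (dmuMap s t D Dh F π Xh Yh a bh) with hRdef
    have hy : R.mkQ C₀ ≠ 0 := by
      rw [Submodule.mkQ_apply, Ne, Submodule.Quotient.mk_eq_zero]
      exact hC₀
    obtain ⟨ψ, hψ⟩ : ∃ ψ : Module.Dual ℂ (_ ⧸ R), ψ (R.mkQ C₀) ≠ 0 := by
      by_contra h; push_neg at h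
      exact hy ((Module.forall_dual_apply_eq_zero_iff ℂ _).mp h)
    set φ : Module.Dual ℂ (∀ v, Dh v →ₗ[ℂ] D v) := ψ ∘ₗ R.mkQ with hφdef
    have hφR : ∀ p, φ (dmuMap s t D Dh F π Xh Yh a bh p) = 0 := by
      intro p
      have : (dmuMap s t D Dh F π Xh Yh a bh p) ∈ R := LinearMap.mem_range_self _ p
      simp only [hφdef, comp_apply, Submodule.mkQ_apply]
      rw [(Submodule.Quotient.mk_eq_zero R).mpr this, map_zero]
    obtain ⟨ξ, hξ⟩ := traceDual_surjective D Dh φ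
    -- the key vanishing identities
    have key : ∀ p, ∑ v : V, trace ℂ (Dh v)
        (ξ v ∘ₗ dmuMap s t D Dh F π Xh Yh a bh p v) = 0 := by
      intro p
      rw [← traceDual_apply, hξ]
      exact hφR p
    -- relation from the Ah-direction
    have relA : ∀ e₀ : E, π (s e₀) ∘ₗ Yh e₀ ∘ₗ ξ (t e₀) = ξ (s e₀) ∘ₗ Yh e₀ ∘ₗ π (t e₀) := by
      intro e₀
      have hAll : ∀ f : Dh (s e₀) →ₗ[ℂ] D (t e₀),
          trace ℂ (Dh (t e₀)) (ξ (t e₀) ∘ₗ (f ∘ₗ π (s e₀) ∘ₗ Yh e₀))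
            = trace ℂ (Dh (s e₀)) (ξ (s e₀) ∘ₗ (Yh e₀ ∘ₗ π (t e₀) ∘ₗ f)) := by
        intro f
        have := key (Pi.single e₀ f, 0, 0, 0)
        simp only [dmuMap, LinearMap.coe_mk, AddHom.coe_mk] at this
        -- simplify the zero parts
        have hsimp : ∀ v : V, ξ v ∘ₗ
            ((∑ e : E, if h : t e = v then
              dcast D h ∘ₗ ((Pi.single e₀ f : ∀ e, Dh (s e) →ₗ[ℂ] D (t e)) e ∘ₗ π (s e) ∘ₗ Yh e
                + Xh e ∘ₗ π (s e) ∘ₗ (0 : ∀ e, Dh (t e) →ₗ[ℂ] D (s e)) e)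
                ∘ₗ dcast Dh h.symm else 0)
            - (∑ e : E, if h : s e = v then
              dcast D h ∘ₗ (Yh e ∘ₗ π (t e) ∘ₗ (Pi.single e₀ f : ∀ e, Dh (s e) →ₗ[ℂ] D (t e)) e
                + (0 : ∀ e, Dh (t e) →ₗ[ℂ] D (s e)) e ∘ₗ π (t e) ∘ₗ Xh e)
                ∘ₗ dcast Dh h.symm else 0)
            + (0 : ∀ v, F v →ₗ[ℂ] D v) v ∘ₗ bh v + a v ∘ₗ (0 : ∀ v, Dh v →ₗ[ℂ] F v) v)
            = ξ v ∘ₗ (if h : t e₀ = v then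
                dcast D h ∘ₗ (f ∘ₗ π (s e₀) ∘ₗ Yh e₀) ∘ₗ dcast Dh h.symm else 0)
              - ξ v ∘ₗ (if h : s e₀ = v then
                dcast D h ∘ₗ (Yh e₀ ∘ₗ π (t e₀) ∘ₗ f) ∘ₗ dcast Dh h.symm else 0) := by
          intro v
          rw [Finset.sum_eq_single e₀
            (fun e _ he => by
              rw [Pi.single_eq_of_ne he]
              split <;> simp)
            (by simp),
            Finset.sum_eq_single e₀
            (fun e _ he => by
              rw [Pi.single_eq_of_ne he]
              split <;> simp)
            (by simp)]
          rw [Pi.single_eq_same]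
          simp only [Pi.zero_apply, comp_zero, zero_comp, add_zero, zero_add]
          rw [comp_sub]
        rw [Finset.sum_congr rfl fun v _ => congrArg (trace ℂ (Dh v)) (hsimp v)] at this
        simp only [map_sub] at this
        rw [Finset.sum_sub_distrib, sum_trace_dite, sum_trace_dite, sub_eq_zero] at this
        exact this
      -- turn it into an equality of maps via trace nondegeneracy
      refine eq_of_trace_comp_eq _ _ fun f => ?_
      have h1 := hAll f
      calc trace ℂ (Dh (s e₀)) ((π (s e₀) ∘ₗ Yh e₀ ∘ₗ ξ (t e₀)) ∘ₗ f)
          = trace ℂ (Dh (s e₀)) ((π (s e₀) ∘ₗ Yh e₀) ∘ₗ (ξ (t e₀) ∘ₗ f)) :=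
            congrArg _ (by ext x; simp)
        _ = trace ℂ (Dh (t e₀)) ((ξ (t e₀) ∘ₗ f) ∘ₗ (π (s e₀) ∘ₗ Yh e₀)) :=
            trace_comp_comm' _ _
        _ = trace ℂ (Dh (t e₀)) (ξ (t e₀) ∘ₗ (f ∘ₗ π (s e₀) ∘ₗ Yh e₀)) :=
            congrArg _ (by ext x; simp)
        _ = trace ℂ (Dh (s e₀)) (ξ (s e₀) ∘ₗ (Yh e₀ ∘ₗ π (t e₀) ∘ₗ f)) := h1
        _ = trace ℂ (Dh (s e₀)) ((ξ (s e₀) ∘ₗ Yh e₀ ∘ₗ π (t e₀)) ∘ₗ f) :=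
            congrArg _ (by ext x; simp)
    -- relation from the Bh-direction
    have relB : ∀ e₀ : E, π (t e₀) ∘ₗ Xh e₀ ∘ₗ ξ (s e₀) = ξ (t e₀) ∘ₗ Xh e₀ ∘ₗ π (s e₀) := by
      intro e₀
      have hAll : ∀ f : Dh (t e₀) →ₗ[ℂ] D (s e₀),
          trace ℂ (Dh (t e₀)) (ξ (t e₀) ∘ₗ (Xh e₀ ∘ₗ π (s e₀) ∘ₗ f))
            = trace ℂ (Dh (s e₀)) (ξ (s e₀) ∘ₗ (f ∘ₗ π (t e₀) ∘ₗ Xh e₀)) := by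
        intro f
        have := key (0, Pi.single e₀ f, 0, 0)
        simp only [dmuMap, LinearMap.coe_mk, AddHom.coe_mk] at this
        have hsimp : ∀ v : V, ξ v ∘ₗ
            ((∑ e : E, if h : t e = v then
              dcast D h ∘ₗ ((0 : ∀ e, Dh (s e) →ₗ[ℂ] D (t e)) e ∘ₗ π (s e) ∘ₗ Yh e
                + Xh e ∘ₗ π (s e) ∘ₗ (Pi.single e₀ f : ∀ e, Dh (t e) →ₗ[ℂ] D (s e)) e)
                ∘ₗ dcast Dh h.symm else 0)
            - (∑ e : E, if h : s e = v then
              dcast D h ∘ₗ (Yh e ∘ₗ π (t e) ∘ₗ (0 : ∀ e, Dh (s e) →ₗ[ℂ] D (t e)) e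
                + (Pi.single e₀ f : ∀ e, Dh (t e) →ₗ[ℂ] D (s e)) e ∘ₗ π (t e) ∘ₗ Xh e)
                ∘ₗ dcast Dh h.symm else 0)
            + (0 : ∀ v, F v →ₗ[ℂ] D v) v ∘ₗ bh v + a v ∘ₗ (0 : ∀ v, Dh v →ₗ[ℂ] F v) v)
            = ξ v ∘ₗ (if h : t e₀ = v then
                dcast D h ∘ₗ (Xh e₀ ∘ₗ π (s e₀) ∘ₗ f) ∘ₗ dcast Dh h.symm else 0)
              - ξ v ∘ₗ (if h : s e₀ = v then
                dcast D h ∘ₗ (f ∘ₗ π (t e₀) ∘ₗ Xh e₀) ∘ₗ dcast Dh h.symm else 0) := by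
          intro v
          rw [Finset.sum_eq_single e₀
            (fun e _ he => by
              rw [Pi.single_eq_of_ne he]
              split <;> simp)
            (by simp),
            Finset.sum_eq_single e₀
            (fun e _ he => by
              rw [Pi.single_eq_of_ne he]
              split <;> simp)
            (by simp)]
          rw [Pi.single_eq_same]
          simp only [Pi.zero_apply, comp_zero, zero_comp, add_zero, zero_add]
          rw [comp_sub]
        rw [Finset.sum_congr rfl fun v _ => congrArg (trace ℂ (Dh v)) (hsimp v)] at this
        simp only [map_sub] at this
        rw [Finset.sum_sub_distrib, sum_trace_dite, sum_trace_dite, sub_eq_zero] at this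
        exact this
      refine eq_of_trace_comp_eq _ _ fun f => ?_
      have h1 := hAll f
      calc trace ℂ (Dh (t e₀)) ((π (t e₀) ∘ₗ Xh e₀ ∘ₗ ξ (s e₀)) ∘ₗ f)
          = trace ℂ (Dh (t e₀)) ((π (t e₀) ∘ₗ Xh e₀) ∘ₗ (ξ (s e₀) ∘ₗ f)) :=
            congrArg _ (by ext x; simp)
        _ = trace ℂ (Dh (s e₀)) ((ξ (s e₀) ∘ₗ f) ∘ₗ (π (t e₀) ∘ₗ Xh e₀)) :=
            trace_comp_comm' _ _
        _ = trace ℂ (Dh (s e₀)) (ξ (s e₀) ∘ₗ (f ∘ₗ π (t e₀) ∘ₗ Xh e₀)) :=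
            congrArg _ (by ext x; simp)
        _ = trace ℂ (Dh (t e₀)) (ξ (t e₀) ∘ₗ (Xh e₀ ∘ₗ π (s e₀) ∘ₗ f)) := h1.symm
        _ = trace ℂ (Dh (t e₀)) ((ξ (t e₀) ∘ₗ Xh e₀ ∘ₗ π (s e₀)) ∘ₗ f) :=
            congrArg _ (by ext x; simp)
    -- relation from the jh-direction: ξ v ∘ a v = 0
    have relJ : ∀ v₀ : V, ξ v₀ ∘ₗ a v₀ = 0 := by
      intro v₀
      refine eq_of_trace_comp_eq _ _ fun f => ?_
      have := key (0, 0, 0, Pi.single v₀ f)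
      simp only [dmuMap, LinearMap.coe_mk, AddHom.coe_mk] at this
      have hsimp : ∀ v : V, ξ v ∘ₗ
          ((∑ e : E, if h : t e = v then
            dcast D h ∘ₗ ((0 : ∀ e, Dh (s e) →ₗ[ℂ] D (t e)) e ∘ₗ π (s e) ∘ₗ Yh e
              + Xh e ∘ₗ π (s e) ∘ₗ (0 : ∀ e, Dh (t e) →ₗ[ℂ] D (s e)) e)
              ∘ₗ dcast Dh h.symm else 0)
          - (∑ e : E, if h : s e = v then
            dcast D h ∘ₗ (Yh e ∘ₗ π (t e) ∘ₗ (0 : ∀ e, Dh (s e) →ₗ[ℂ] D (t e)) e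
              + (0 : ∀ e, Dh (t e) →ₗ[ℂ] D (s e)) e ∘ₗ π (t e) ∘ₗ Xh e)
              ∘ₗ dcast Dh h.symm else 0)
          + (0 : ∀ v, F v →ₗ[ℂ] D v) v ∘ₗ bh v
          + a v ∘ₗ (Pi.single v₀ f : ∀ v, Dh v →ₗ[ℂ] F v) v)
          = ξ v ∘ₗ (a v ∘ₗ (Pi.single v₀ f : ∀ v, Dh v →ₗ[ℂ] F v) v) := by
        intro v
        congr 1
        rw [Finset.sum_eq_zero (fun e _ => by split <;> simp),
          Finset.sum_eq_zero (fun e _ => by split <;> simp)]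
        simp
      rw [Finset.sum_congr rfl fun v _ => congrArg (trace ℂ (Dh v)) (hsimp v)] at this
      rw [Finset.sum_eq_single v₀
        (fun v _ hv => by rw [Pi.single_eq_of_ne hv]; simp) (by simp),
        Pi.single_eq_same] at this
      rw [show ξ v₀ ∘ₗ (a v₀ ∘ₗ f) = (ξ v₀ ∘ₗ a v₀) ∘ₗ f by ext x; simp] at this
      rw [this]
      simp
    -- stability forces ξ = 0
    have hξ0 : ∀ v, ξ v = 0 := by
      have := hstable (fun v => LinearMap.ker (ξ v))
        (fun e x hx => by
          have h1 := relB e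
          have h2 : (π (t e) ∘ₗ Xh e ∘ₗ ξ (s e)) x = (ξ (t e) ∘ₗ Xh e ∘ₗ π (s e)) x := by
            rw [h1]
          simp only [comp_apply] at h2
          simp only [LinearMap.mem_ker] at hx ⊢
          simp only [comp_apply]
          rw [← h2, hx]
          simp)
        (fun e x hx => by
          have h1 := relA e
          have h2 : (π (s e) ∘ₗ Yh e ∘ₗ ξ (t e)) x = (ξ (s e) ∘ₗ Yh e ∘ₗ π (t e)) x := by
            rw [h1]
          simp only [comp_apply] at h2
          simp only [LinearMap.mem_ker] at hx ⊢
          simp only [comp_apply]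
          rw [← h2, hx]
          simp)
        (fun v f => by
          have := relJ v
          simp only [LinearMap.mem_ker]
          have h2 : (ξ v ∘ₗ a v) f = (0 : F v →ₗ[ℂ] Dh v) f := by rw [this]
          simpa using h2)
      intro v
      exact LinearMap.ker_eq_top.mp (this v)
    have : φ = 0 := by
      rw [← hξ]
      have : ξ = 0 := funext hξ0
      rw [this, map_zero]
    apply hψ
    have h0 : φ C₀ = 0 := by rw [this]; rfl
    simpa [hφdef] using h0
  intro C
  have hC : C ∈ LinearMap.range (dmuMap s t D Dh F π Xh Yh a bh) := hrange ▸ Submodule.mem_top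
  obtain ⟨p, hp⟩ := hC
  refine ⟨p.1, p.2.1, p.2.2.1, p.2.2.2, fun v => ?_⟩
  have := congrFun hp v
  simpa [dmuMap] using this
end

section
/- Let (A, B, i) be framed representation data on spaces (D_v) and (Â, B̂, î) framed representation data on spaces (D̂_v), both with the same framing (F_v), and assume (Â, B̂, î) is stable. Suppose linear maps π_v : D_v → D̂_v satisfy π_{t(e)}∘A_e = Â_e∘π_{s(e)} and π_{s(e)}∘B_e = B̂_e∘π_{t(e)} for all arrows e and π_v∘i_v = î_v for all vertices v; suppose moreover that ker(π_{s(e)}) ⊆ ker(A_e) and ker(π_{t(e)}) ⊆ ker(B_e) for every arrow e, and that for every vertex v one has D_v = ∑_{e : t(e)=v} range(A_e) + ∑_{e : s(e)=v} range(B_e) + range(i_v). Then (A, B, i) is stable. (This is the key step in describing the image and fibers of the second projection from the split parabolic quiver variety.) -/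
open Module LinearMap

/-- If the data `(A, B, i)` maps onto stable data `(Â, B̂, î)`, the arrow maps kill
the kernels of `π`, and the incoming arrow maps together with the framing map span
each `D_v`, then `(A, B, i)` is itself stable. -/
theorem stable_of_lift
    {V E : Type*} [Fintype V] [Fintype E] (s t : E → V)
    (D Dh F : V → Type*)
    [∀ v, AddCommGroup (D v)] [∀ v, Module ℂ (D v)] [∀ v, FiniteDimensional ℂ (D v)]
    [∀ v, AddCommGroup (Dh v)] [∀ v, Module ℂ (Dh v)] [∀ v, FiniteDimensional ℂ (Dh v)]
    [∀ v, AddCommGroup (F v)] [∀ v, Module ℂ (F v)] [∀ v, FiniteDimensional ℂ (F v)]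
    (A : ∀ e, D (s e) →ₗ[ℂ] D (t e)) (B : ∀ e, D (t e) →ₗ[ℂ] D (s e))
    (i : ∀ v, F v →ₗ[ℂ] D v)
    (Ah : ∀ e, Dh (s e) →ₗ[ℂ] Dh (t e)) (Bh : ∀ e, Dh (t e) →ₗ[ℂ] Dh (s e))
    (ih : ∀ v, F v →ₗ[ℂ] Dh v)
    (hstable : Stable s t Dh F Ah Bh ih)
    (π : ∀ v, D v →ₗ[ℂ] Dh v)
    (hA : ∀ e, π (t e) ∘ₗ A e = Ah e ∘ₗ π (s e))
    (hB : ∀ e, π (s e) ∘ₗ B e = Bh e ∘ₗ π (t e))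
    (hi : ∀ v, π v ∘ₗ i v = ih v)
    (hkerA : ∀ e, ∀ x, π (s e) x = 0 → A e x = 0)
    (hkerB : ∀ e, ∀ x, π (t e) x = 0 → B e x = 0)
    (hspan : ∀ v, (⨆ e : {e : E // t e = v}, LinearMap.range (dcast D e.2 ∘ₗ A e.1)) ⊔
      (⨆ e : {e : E // s e = v}, LinearMap.range (dcast D e.2 ∘ₗ B e.1)) ⊔
      LinearMap.range (i v) = ⊤) :
    Stable s t D F A B i := by
  intro S hSA hSB hSi
  -- the image family is a subrepresentation of Dh
  have hSh : ∀ v, (S v).map (π v) = ⊤ := by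
    apply hstable
    · rintro e x ⟨a, ha, rfl⟩
      exact ⟨A e a, hSA e a ha, by simpa using LinearMap.congr_fun (hA e) a⟩
    · rintro e x ⟨a, ha, rfl⟩
      exact ⟨B e a, hSB e a ha, by simpa using LinearMap.congr_fun (hB e) a⟩
    · intro v f
      exact ⟨i v f, hSi v f, by simpa using LinearMap.congr_fun (hi v) f⟩
  have hcast : ∀ {v w : V} (h : v = w), ∀ x ∈ S v, dcast D h x ∈ S w := by
    intro v w h x hx; subst h; simpa [dcast] using hx
  have hAim : ∀ e a, A e a ∈ S (t e) := by
    intro e a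
    have : π (s e) a ∈ (S (s e)).map (π (s e)) := by rw [hSh]; trivial
    obtain ⟨a', ha', hpa⟩ := this
    have hker : π (s e) (a - a') = 0 := by simp [hpa]
    have : A e (a - a') = 0 := hkerA e _ hker
    have heq : A e a = A e a' := by
      have := sub_eq_zero.mp (by simpa [map_sub] using this); exact this
    rw [heq]; exact hSA e a' ha'
  have hBim : ∀ e a, B e a ∈ S (s e) := by
    intro e a
    have : π (t e) a ∈ (S (t e)).map (π (t e)) := by rw [hSh]; trivial
    obtain ⟨a', ha', hpa⟩ := this
    have hker : π (t e) (a - a') = 0 := by simp [hpa]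
    have : B e (a - a') = 0 := hkerB e _ hker
    have heq : B e a = B e a' := by
      have := sub_eq_zero.mp (by simpa [map_sub] using this); exact this
    rw [heq]; exact hSB e a' ha'
  intro v
  rw [eq_top_iff, ← hspan v]
  refine sup_le (sup_le (iSup_le ?_) (iSup_le ?_)) ?_
  · rintro ⟨e, he⟩ x ⟨a, rfl⟩
    exact hcast he _ (hAim e a)
  · rintro ⟨e, he⟩ x ⟨a, rfl⟩
    exact hcast he _ (hBim e a)
  · rintro x ⟨f, rfl⟩
    exact hSi v f
end
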